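/- Let $\rho:(0,\infty)\to(0,\infty)$ be continuous and nondecreasing with $\rho(y)/y\to0$ as $y\downarrow0$, satisfying the Osgood condition, and let $\phi=\Theta^{-1}:(-\infty,M)\to(0,\infty)$ be the inverse of $\Theta(y)=\int_{y_*}^y dr/\rho(r)$. Then $\phi'(z)=\rho(\phi(z))$, $\phi(z)\to0$ as $z\to-\infty$, and for every fixed $C_0>0$, $\phi(z+C_0)/\phi(z)\to1$ as $z\to-\infty$. -/

import Mathlib

open MeasureTheory Set Filter intervalIntegral

/-- **Asymptotic shift-invariance of the inverse Bihari kernel.** If `ρ` is continuous,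
positive, nondecreasing on `(0,∞)` with `ρ(y)/y → 0` as `y ↓ 0` and satisfies the Osgood
condition, and `φ = Θ⁻¹` is the inverse of `Θ(y) = ∫_{y⋆}^y dr/ρ(r)` on its range `S`,
then `φ'(z) = ρ(φ(z))`, `φ(z) → 0` as `z → -∞`, and for every fixed `C₀ > 0`,
`φ(z + C₀)/φ(z) → 1` as `z → -∞`. -/
theorem inverse_bihari_shift_invariance
    (ρ Θ φ : ℝ → ℝ) (ystar C0 : ℝ) (S : Set ℝ)
    (hy : 0 < ystar) (hC0 : 0 < C0)
    (hρ_cont : ContinuousOn ρ (Ioi 0)) (hρ_pos : ∀ r > 0, 0 < ρ r)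
    (hρ_mono : MonotoneOn ρ (Ioi 0))
    (hρ_sub : Tendsto (fun y => ρ y / y) (nhdsWithin 0 (Ioi 0)) (nhds 0))
    (hOsgood : ∀ c > 0, ¬ IntervalIntegrable (fun r => 1 / ρ r) volume 0 c)
    (hΘ : ∀ y > 0, Θ y = ∫ r in ystar..y, 1 / ρ r)
    (hS : S = Θ '' (Ioi 0)) (hS_open : IsOpen S)
    (hS_down : ∀ z ∈ S, ∀ z' ≤ z, z' ∈ S)
    (hφ_left : ∀ y > 0, φ (Θ y) = y)
    (hφ_right : ∀ z ∈ S, 0 < φ z ∧ Θ (φ z) = z) :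
    (∀ z ∈ S, HasDerivAt φ (ρ (φ z)) z) ∧
    Tendsto φ atBot (nhds 0) ∧
    Tendsto (fun z => φ (z + C0) / φ z) atBot (nhds 1) := by
  have hinv_cont : ContinuousOn (fun r => 1 / ρ r) (Ioi 0) :=
    continuousOn_const.div hρ_cont (fun y hyy => (hρ_pos y hyy).ne')
  have hint : ∀ a > (0:ℝ), ∀ b > (0:ℝ),
      IntervalIntegrable (fun r => 1 / ρ r) volume a b := by
    intro a ha b hb
    apply (hinv_cont.mono ?_).intervalIntegrable
    intro x hx
    exact lt_of_lt_of_le (lt_min ha hb) hx.1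
  -- Θ is strictly monotone on (0,∞)
  have hΘmono : StrictMonoOn Θ (Ioi 0) := by
    intro a ha b hb hab
    have h1 : Θ b - Θ a = ∫ r in a..b, 1 / ρ r := by
      rw [hΘ a ha, hΘ b hb,
        intervalIntegral.integral_interval_sub_left (hint ystar hy b hb) (hint ystar hy a ha)]
    have h2 : 0 < ∫ r in a..b, 1 / ρ r := by
      apply intervalIntegral.intervalIntegral_pos_of_pos_on (hint a ha b hb)
      · intro x hx
        exact one_div_pos.2 (hρ_pos x (lt_trans ha hx.1))
      · exact hab
    linarith [h1 ▸ h2]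
  have hΘmem : ∀ a > (0:ℝ), Θ a ∈ S := by
    intro a ha; rw [hS]; exact ⟨a, ha, rfl⟩
  -- continuity of φ on S
  have hφcont : ∀ z ∈ S, ContinuousAt φ z := by
    intro z hz
    obtain ⟨hφz, hΘφz⟩ := hφ_right z hz
    rw [Metric.continuousAt_iff]
    intro ε hε
    set e := min ε (φ z / 2) with he
    have he0 : 0 < e := lt_min hε (by positivity)
    have hey : e < φ z := lt_of_le_of_lt (min_le_right _ _) (by linarith)
    have ha : (0:ℝ) < φ z - e := by linarith
    have hb : (0:ℝ) < φ z + e := by linarith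
    have h1 : Θ (φ z - e) < z := by
      have := hΘmono ha hφz (by linarith)
      rwa [hΘφz] at this
    have h2 : z < Θ (φ z + e) := by
      have := hΘmono hφz hb (by linarith)
      rwa [hΘφz] at this
    refine ⟨min (z - Θ (φ z - e)) (Θ (φ z + e) - z), lt_min (by linarith) (by linarith), ?_⟩
    intro z' hz'
    rw [Real.dist_eq] at hz'
    have hz'1 : Θ (φ z - e) < z' := by
      have := abs_lt.1 hz'
      have := min_le_left (z - Θ (φ z - e)) (Θ (φ z + e) - z)
      linarith
    have hz'2 : z' < Θ (φ z + e) := by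
      have := abs_lt.1 hz'
      have := min_le_right (z - Θ (φ z - e)) (Θ (φ z + e) - z)
      linarith
    have hz'S : z' ∈ S := hS_down _ (hΘmem _ hb) z' hz'2.le
    obtain ⟨hφz', hΘφz'⟩ := hφ_right z' hz'S
    have hlow : φ z - e < φ z' := by
      have : Θ (φ z - e) < Θ (φ z') := by rw [hΘφz']; exact hz'1
      exact (hΘmono.lt_iff_lt ha hφz').1 this
    have hhigh : φ z' < φ z + e := by
      have : Θ (φ z') < Θ (φ z + e) := by rw [hΘφz']; exact hz'2
      exact (hΘmono.lt_iff_lt hφz' hb).1 this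
    rw [Real.dist_eq, abs_lt]
    constructor
    · have := min_le_left ε (φ z / 2); linarith
    · have := min_le_left ε (φ z / 2); linarith
  -- derivative of Θ
  have hΘderiv : ∀ y0 > (0:ℝ), HasDerivAt Θ (1 / ρ y0) y0 := by
    intro y0 hy0
    have hF : HasDerivAt (fun u => ∫ r in ystar..u, 1 / ρ r) (1 / ρ y0) y0 :=
      intervalIntegral.integral_hasDerivAt_right (hint ystar hy y0 hy0)
        (hinv_cont.stronglyMeasurableAtFilter isOpen_Ioi y0 hy0)
        (hinv_cont.continuousAt (isOpen_Ioi.mem_nhds hy0))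
    apply hF.congr_of_eventuallyEq
    filter_upwards [isOpen_Ioi.mem_nhds hy0] with u hu using hΘ u hu
  -- Part 1
  have part1 : ∀ z ∈ S, HasDerivAt φ (ρ (φ z)) z := by
    intro z hz
    obtain ⟨hφz, hΘφz⟩ := hφ_right z hz
    have hfg : ∀ᶠ w in nhds z, Θ (φ w) = w := by
      filter_upwards [hS_open.mem_nhds hz] with w hw using (hφ_right w hw).2
    have h := HasDerivAt.of_local_left_inverse (hφcont z hz)
      (hΘderiv (φ z) hφz) (one_div_ne_zero (hρ_pos _ hφz).ne') hfg
    simpa [one_div, inv_inv] using h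
  -- eventually in S
  have hSbot : ∀ᶠ z in atBot, z ∈ S :=
    eventually_atBot.2 ⟨Θ ystar, fun z hzle => hS_down _ (hΘmem ystar hy) z hzle⟩
  -- Part 2
  have part2 : Tendsto φ atBot (nhds 0) := by
    rw [tendsto_order]
    constructor
    · intro a ha
      filter_upwards [hSbot] with z hz using lt_trans ha (hφ_right z hz).1
    · intro a ha
      rw [eventually_atBot]
      refine ⟨Θ a - 1, fun z hzle => ?_⟩
      have hzS : z ∈ S := hS_down _ (hΘmem a ha) z (by linarith)
      obtain ⟨hφz, hΘφz⟩ := hφ_right z hzS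
      have : Θ (φ z) < Θ a := by rw [hΘφz]; linarith
      exact (hΘmono.lt_iff_lt hφz ha).1 this
  refine ⟨part1, part2, ?_⟩
  -- Part 3
  have hlog : Tendsto (fun z => Real.log (φ (z + C0)) - Real.log (φ z)) atBot (nhds 0) := by
    rw [Metric.tendsto_nhds]
    intro ε hε
    set ε' := ε / (2 * C0) with hε'def
    have hε' : 0 < ε' := by positivity
    have hmem : {y | ρ y / y < ε'} ∈ nhdsWithin 0 (Ioi (0:ℝ)) := hρ_sub (Iio_mem_nhds hε')
    rw [Metric.mem_nhdsWithin_iff] at hmem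
    obtain ⟨δ, hδ, hδsub⟩ := hmem
    have hev : ∀ᶠ s in atBot, s ∈ S ∧ 0 < φ s ∧ φ s < δ := by
      filter_upwards [hSbot, part2 (Iio_mem_nhds hδ)] with s hs1 hs2
      exact ⟨hs1, (hφ_right s hs1).1, hs2⟩
    obtain ⟨Z, hZ⟩ := eventually_atBot.1 hev
    rw [eventually_atBot]
    refine ⟨Z - C0, fun z hz => ?_⟩
    have hmemI : ∀ s ∈ Icc z (z + C0), s ∈ S ∧ 0 < φ s ∧ φ s < δ := by
      intro s hs
      exact hZ s (by linarith [hs.2])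
    have hderiv : ∀ s ∈ Icc z (z + C0),
        HasDerivWithinAt (fun u => Real.log (φ u)) (ρ (φ s) / φ s) (Icc z (z + C0)) s := by
      intro s hs
      obtain ⟨hsS, hφs, _⟩ := hmemI s hs
      exact ((part1 s hsS).log hφs.ne').hasDerivWithinAt
    have hbound : ∀ s ∈ Icc z (z + C0), ‖ρ (φ s) / φ s‖ ≤ ε' := by
      intro s hs
      obtain ⟨hsS, hφs, hφsδ⟩ := hmemI s hs
      have hballin : φ s ∈ Metric.ball (0:ℝ) δ ∩ Ioi 0 := by
        constructor
        · rw [Metric.mem_ball, Real.dist_eq, sub_zero, abs_of_pos hφs]; exact hφsδ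
        · exact hφs
      have hlt : ρ (φ s) / φ s < ε' := hδsub hballin
      have hpos : 0 ≤ ρ (φ s) / φ s := le_of_lt (div_pos (hρ_pos _ hφs) hφs)
      rw [Real.norm_eq_abs, abs_of_nonneg hpos]
      exact hlt.le
    have hmvt := Convex.norm_image_sub_le_of_norm_hasDerivWithin_le hderiv hbound
      (convex_Icc z (z + C0)) (⟨le_refl z, by linarith⟩ : z ∈ Icc z (z + C0))
      (⟨by linarith, le_refl _⟩ : z + C0 ∈ Icc z (z + C0))
    rw [Real.dist_eq, sub_zero]
    have : ‖z + C0 - z‖ = C0 := by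
      rw [Real.norm_eq_abs]; rw [show z + C0 - z = C0 by ring]; exact abs_of_pos hC0
    rw [this] at hmvt
    have : ε' * C0 = ε / 2 := by
      rw [hε'def, div_mul_eq_mul_div, div_eq_div_iff (by positivity) (by positivity)]; ring
    calc |Real.log (φ (z + C0)) - Real.log (φ z)|
        ≤ ε' * C0 := hmvt
      _ = ε / 2 := this
      _ < ε := by linarith
  have hexp : Tendsto (fun z => Real.exp (Real.log (φ (z + C0)) - Real.log (φ z)))
      atBot (nhds 1) := by
    have := (Real.continuous_exp.tendsto 0).comp hlog
    simpa [Function.comp_def] using this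
  apply hexp.congr'
  have hSbot' : ∀ᶠ z in atBot, z + C0 ∈ S := by
    obtain ⟨Z', hZ'⟩ := eventually_atBot.1 hSbot
    exact eventually_atBot.2 ⟨Z' - C0, fun z hz => hZ' _ (by linarith)⟩
  filter_upwards [hSbot, hSbot'] with z hz hz'
  rw [Real.exp_sub, Real.exp_log (hφ_right _ hz').1, Real.exp_log (hφ_right z hz).1]
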